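/- arXiv:2506.23794 — 3 statements merged into one kernel-verified Lean document; each statement's English description precedes it below -/
import Mathlib

section
/- Let n be a positive integer and let P be a triangle-free graph on {1,...,n}. Define the graph B_2 whose vertices are the 2-element subsets of {1,...,n}, where distinct pairs e_1 and e_2 are adjacent if and only if |e_1 ∩ e_2| = 1 and the symmetric difference e_1 △ e_2 is an edge of P. Then B_2 is triangle-free: there are no three 2-element subsets e_1, e_2, e_3 that are pairwise adjacent in B_2. (Claim 4 in the proof of Theorem 1.) -/
/-- A graph on `{1,...,n}` is identified with a set of 2-element subsets of `Fin n`. -/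
def IsGraph {n : ℕ} (P : Finset (Finset (Fin n))) : Prop :=
  ∀ e ∈ P, e.card = 2

/-- A graph (given by its edge set) is triangle-free if no three pairwise adjacent vertices. -/
def TriangleFree {n : ℕ} (P : Finset (Finset (Fin n))) : Prop :=
  ¬ ∃ a b c : Fin n, a ≠ b ∧ a ≠ c ∧ b ≠ c ∧
      ({a, b} : Finset (Fin n)) ∈ P ∧ ({a, c} : Finset (Fin n)) ∈ P ∧
      ({b, c} : Finset (Fin n)) ∈ P

/-- Adjacency in the graph `B₂` on the 2-element subsets of `{1,...,n}`: distinct pairs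
`e₁, e₂` are adjacent iff `|e₁ ∩ e₂| = 1` and the symmetric difference `e₁ ∆ e₂` is an
edge of `P`. -/
def B2Adj {n : ℕ} (P : Finset (Finset (Fin n))) (e1 e2 : Finset (Fin n)) : Prop :=
  e1 ≠ e2 ∧ (e1 ∩ e2).card = 1 ∧ symmDiff e1 e2 ∈ P

lemma pair_struct {n : ℕ} {e1 e2 : Finset (Fin n)} (h1 : e1.card = 2) (h2 : e2.card = 2)
    (hne : e1 ≠ e2) (hint : (e1 ∩ e2).card = 1) :
    ∃ x p q : Fin n, x ≠ p ∧ x ≠ q ∧ p ≠ q ∧ e1 = {x, p} ∧ e2 = {x, q} ∧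
      symmDiff e1 e2 = {p, q} := by
  obtain ⟨x, hx⟩ := Finset.card_eq_one.mp hint
  have hx1 : x ∈ e1 := (Finset.mem_inter.mp (hx ▸ Finset.mem_singleton_self x)).1
  have hx2 : x ∈ e2 := (Finset.mem_inter.mp (hx ▸ Finset.mem_singleton_self x)).2
  obtain ⟨a, b, hab, rfl⟩ := Finset.card_eq_two.mp h1
  obtain ⟨c, d, hcd, rfl⟩ := Finset.card_eq_two.mp h2
  have hm1 : x = a ∨ x = b := by simpa using hx1
  have hm2 : x = c ∨ x = d := by simpa using hx2
  obtain ⟨p, hxp, hp1⟩ : ∃ p, x ≠ p ∧ ({a,b} : Finset (Fin n)) = {x, p} := by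
    rcases hm1 with rfl | rfl
    · exact ⟨b, hab, rfl⟩
    · exact ⟨a, Ne.symm hab, by rw [Finset.pair_comm]⟩
  obtain ⟨q, hxq, hq1⟩ : ∃ q, x ≠ q ∧ ({c,d} : Finset (Fin n)) = {x, q} := by
    rcases hm2 with rfl | rfl
    · exact ⟨d, hcd, rfl⟩
    · exact ⟨c, Ne.symm hcd, by rw [Finset.pair_comm]⟩
  have hpq : p ≠ q := by rintro rfl; exact hne (hp1.trans hq1.symm)
  refine ⟨x, p, q, hxp, hxq, hpq, hp1, hq1, ?_⟩
  rw [hp1, hq1]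
  ext t
  simp only [Finset.mem_symmDiff, Finset.mem_insert, Finset.mem_singleton]
  constructor
  · rintro (⟨rfl | rfl, h⟩ | ⟨rfl | rfl, h⟩) <;> tauto
  · rintro (rfl | rfl)
    · exact Or.inl ⟨Or.inr rfl, by push_neg; exact ⟨Ne.symm hxp, hpq⟩⟩
    · exact Or.inr ⟨Or.inr rfl, by push_neg; exact ⟨Ne.symm hxq, Ne.symm hpq⟩⟩


/-- Claim 4: if `P` is triangle-free, then the graph `B₂` is triangle-free, i.e. there are
no three 2-element subsets `e₁, e₂, e₃` that are pairwise adjacent in `B₂`. -/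
theorem stmt5 {n : ℕ} (hn : 0 < n) (P : Finset (Finset (Fin n)))
    (hP : IsGraph P) (hPtf : TriangleFree P) :
    ¬ ∃ e1 e2 e3 : Finset (Fin n), e1.card = 2 ∧ e2.card = 2 ∧ e3.card = 2 ∧
      B2Adj P e1 e2 ∧ B2Adj P e1 e3 ∧ B2Adj P e2 e3 := by
  rintro ⟨e1, e2, e3, h1, h2, h3, ⟨hne12, hi12, hs12⟩, ⟨hne13, hi13, hs13⟩, ⟨hne23, hi23, hs23⟩⟩
  obtain ⟨x, p, q, hxp, hxq, hpq, he1x, he2x, hsd12⟩ := pair_struct h1 h2 hne12 hi12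
  obtain ⟨y, r, s, hyr, hys, hrs, he1y, he3y, hsd13⟩ := pair_struct h1 h3 hne13 hi13
  obtain ⟨z, u, v, hzu, hzv, huv, he2z, he3z, hsd23⟩ := pair_struct h2 h3 hne23 hi23
  rw [hsd12] at hs12; rw [hsd13] at hs13; rw [hsd23] at hs23
  have hy : y = x ∨ y = p := by
    have hm : y ∈ e1 := by rw [he1y]; simp
    rw [he1x] at hm; simpa using hm
  have hr : r = x ∨ r = p := by
    have hm : r ∈ e1 := by rw [he1y]; simp
    rw [he1x] at hm; simpa using hm
  have hz : z = x ∨ z = q := by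
    have hm : z ∈ e2 := by rw [he2z]; simp
    rw [he2x] at hm; simpa using hm
  have hu : u = x ∨ u = q := by
    have hm : u ∈ e2 := by rw [he2z]; simp
    rw [he2x] at hm; simpa using hm
  rcases hy with h | h
  · -- y = x : e3 = {x, s}
    have hxs : x ≠ s := h ▸ hys
    have he3' : e3 = {x, s} := by rw [he3y, h]
    have hrp : r = p := hr.resolve_left (fun e => hyr (h.trans e.symm))
    have hs13' : ({p, s} : Finset (Fin n)) ∈ P := hrp ▸ hs13
    have hps : p ≠ s := hrp ▸ hrs
    rcases hz with hz' | hz'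
    · -- z = x : star with center x
      have huq : u = q := hu.resolve_left (fun e => hzu (hz'.trans e.symm))
      have hvmem : v ∈ e3 := by rw [he3z]; simp
      have hv : v = x ∨ v = s := by rw [he3'] at hvmem; simpa using hvmem
      have hvs : v = s := hv.resolve_left (fun e => hzv (hz'.trans e.symm))
      have hqs : q ≠ s := by rw [← huq, ← hvs]; exact huv
      rw [huq, hvs] at hs23
      exact hPtf ⟨p, q, s, hpq, hps, hqs, hs12, hs13', hs23⟩
    · -- z = q : q ∈ e3 forces e3 = e2
      have hq3 : q ∈ e3 := by rw [he3z, hz']; simp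
      have hq : q = x ∨ q = s := by rw [he3'] at hq3; simpa using hq3
      rcases hq with hq' | hq'
      · exact absurd hq'.symm hxq
      · exact hne23 (by rw [he2x, he3', hq'])
  · -- y = p : e3 = {p, s}
    have hps : p ≠ s := h ▸ hys
    have he3' : e3 = {p, s} := by rw [he3y, h]
    have hrx : r = x := hr.resolve_right (fun e => hyr (h.trans e.symm))
    have hs13' : ({x, s} : Finset (Fin n)) ∈ P := hrx ▸ hs13
    rcases hz with hz' | hz'
    · -- z = x : x ∈ e3 forces e3 = e1
      have hx3 : x ∈ e3 := by rw [he3z, hz']; simp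
      have hx : x = p ∨ x = s := by rw [he3'] at hx3; simpa using hx3
      rcases hx with hx' | hx'
      · exact absurd hx' hxp
      · exact hne13 (by rw [he1x, he3', ← hx', Finset.pair_comm])
    · -- z = q : triangle x, p, q
      have hq3 : q ∈ e3 := by rw [he3z, hz']; simp
      have hq : q = p ∨ q = s := by rw [he3'] at hq3; simpa using hq3
      rcases hq with hq' | hq'
      · exact absurd hq'.symm hpq
      · have hux : u = x := hu.resolve_right (fun e => hzu (hz'.trans e.symm))
        have hvmem : v ∈ e3 := by rw [he3z]; simp
        have hv : v = p ∨ v = s := by rw [he3'] at hvmem; simpa using hvmem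
        have hvp : v = p := hv.resolve_right (fun e => hzv (hz'.trans (hq'.trans e.symm)))
        rw [← hq'] at hs13'
        rw [hux, hvp] at hs23
        exact hPtf ⟨x, p, q, hxp, hxq, hpq, hs23, hs13', hs12⟩
end

section
/- The function ψ defined on [0,∞) by ψ(d) = (d·ln d − d + 1)/(d−1)² for d ∉ {0,1}, ψ(0) = 1, ψ(1) = 1/2, is continuous on [0,∞), takes values in (0,1], and is (weakly) decreasing on [0,∞); in particular (d·ln d − d + 1)/(d−1)² tends to 1/2 as d tends to 1. -/
open MeasureTheory intervalIntegral Real Set Filter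


/-- The function `ψ : [0,∞) → (0,1]` with `ψ(d) = (d·ln d − d + 1)/(d−1)²` for `d ∉ {0,1}`,
`ψ(0) = 1` and `ψ(1) = 1/2`. -/
noncomputable def psi (d : ℝ) : ℝ :=
  if d = 0 then 1
  else if d = 1 then 1 / 2
  else (d * Real.log d - d + 1) / (d - 1) ^ 2

noncomputable def Fint (d : ℝ) : ℝ := ∫ t in (0:ℝ)..1, (1 - t) / (1 + t * (d - 1))

lemma den_pos {d t : ℝ} (hd : 0 ≤ d) (ht0 : 0 ≤ t) (ht1 : t < 1) :
    0 < 1 + t * (d - 1) := by nlinarith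

lemma integrand_bounds {d t : ℝ} (hd : 0 ≤ d) (ht0 : 0 ≤ t) (ht1 : t ≤ 1) :
    0 ≤ (1 - t) / (1 + t * (d - 1)) ∧ (1 - t) / (1 + t * (d - 1)) ≤ 1 := by
  rcases eq_or_lt_of_le ht1 with h | h
  · subst h; simp
  · have hden := den_pos hd ht0 h
    refine ⟨div_nonneg (by linarith) hden.le, ?_⟩
    rw [div_le_one hden]; nlinarith

lemma integrable_integrand {d : ℝ} (hd : 0 ≤ d) :
    IntervalIntegrable (fun t => (1 - t) / (1 + t * (d - 1))) volume 0 1 := by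
  rw [intervalIntegrable_iff]
  have hc : IntegrableOn (fun _ : ℝ => (1:ℝ)) (Set.uIoc 0 1) volume := by
    rw [Set.uIoc_of_le zero_le_one]
    exact integrableOn_const (by simp)
  apply hc.mono'
  · exact ((measurable_const.sub measurable_id).div
      (measurable_const.add (measurable_id.mul_const _))).aestronglyMeasurable
  · rw [ae_restrict_iff' measurableSet_uIoc]
    refine Eventually.of_forall fun t ht => ?_
    rw [Set.uIoc_of_le zero_le_one] at ht
    have h := integrand_bounds hd ht.1.le ht.2
    rw [Real.norm_eq_abs, abs_of_nonneg h.1]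
    exact h.2

lemma Fint_eq_psi {d : ℝ} (hd : 0 ≤ d) : Fint d = psi d := by
  rcases eq_or_lt_of_le hd with h0 | h0
  · -- d = 0
    subst h0
    have : Fint 0 = ∫ t in (0:ℝ)..1, (1:ℝ) := by
      apply intervalIntegral.integral_congr_ae
      filter_upwards [compl_mem_ae_iff.mpr
        (Real.volume_singleton (a := (1:ℝ)))] with t ht _
      have : (1:ℝ) - t ≠ 0 := by
        intro h; apply ht; simp only [Set.mem_singleton_iff]; linarith
      rw [show 1 + t * ((0:ℝ) - 1) = 1 - t by ring, div_self this]
    rw [this]; simp [psi]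
  rcases eq_or_ne d 1 with h1 | h1
  · subst h1
    have : Fint 1 = ∫ t in (0:ℝ)..1, (1 - t) := by
      apply intervalIntegral.integral_congr
      intro t _; norm_num
    rw [this, intervalIntegral.integral_sub intervalIntegrable_const
      intervalIntegral.intervalIntegrable_id, intervalIntegral.integral_const,
      integral_id]
    norm_num [psi]
  · -- 0 < d, d ≠ 1
    set c := d - 1 with hc
    have hcne : c ≠ 0 := by simp [hc, sub_eq_zero, h1]
    have hden : ∀ t ∈ Set.uIcc (0:ℝ) 1, 1 + t * c ≠ 0 := by
      intro t ht
      rw [Set.uIcc_of_le zero_le_one] at ht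
      rcases eq_or_lt_of_le ht.2 with h | h
      · subst h; simp [hc]; linarith
      · exact (den_pos h0.le ht.1 h).ne'
    have key : Fint d = (-(1:ℝ)/c + d/c^2 * Real.log (1+1*c)) -
        (-(0:ℝ)/c + d/c^2 * Real.log (1+0*c)) := by
      unfold Fint
      refine intervalIntegral.integral_eq_sub_of_hasDerivAt
        (f := fun t : ℝ => -t/c + d/c^2 * Real.log (1+t*c)) (fun t ht => ?_)
        (integrable_integrand hd)
      · have h1' : HasDerivAt (fun t : ℝ => 1 + t * c) c t := by
          simpa using ((hasDerivAt_id t).mul_const c).const_add 1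
        have h2 : HasDerivAt (fun t : ℝ => Real.log (1 + t * c)) (c / (1 + t * c)) t :=
          h1'.log (hden t ht)
        have h3 : HasDerivAt (fun t : ℝ => -t/c + d/c^2 * Real.log (1 + t * c))
            (-1/c + d/c^2 * (c / (1 + t * c))) t := by
          exact (((hasDerivAt_id t).neg.div_const c)).add (h2.const_mul _)
        have hne := hden t ht
        refine h3.congr_deriv ?_
        rw [eq_div_iff hne, add_mul, mul_assoc (d/c^2), div_mul_cancel₀ c hne]
        have hd' : d = c + 1 := by rw [hc]; ring
        rw [hd']
        clear_value c
        linear_combination (c⁻¹ - t + c*c⁻¹ + 1) * mul_inv_cancel₀ hcne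
    rw [key]
    have hd1 : 1 + 1 * c = d := by ring
    rw [hd1]
    simp only [psi, if_neg h0.ne', if_neg h1]
    rw [show (1:ℝ) + 0 * c = 1 by ring, Real.log_one]
    field_simp
    ring

lemma Fint_continuousOn : ContinuousOn Fint (Set.Ici (0:ℝ)) := by
  intro x₀ hx₀
  apply intervalIntegral.continuousWithinAt_of_dominated_interval (bound := fun _ => 1)
  · refine Eventually.of_forall fun x => ?_
    exact ((measurable_const.sub measurable_id).div
      (measurable_const.add (measurable_id.mul_const _))).aestronglyMeasurable
  · refine eventually_nhdsWithin_of_forall fun x hx => ?_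
    refine Eventually.of_forall fun t ht => ?_
    rw [Set.uIoc_of_le zero_le_one] at ht
    have h := integrand_bounds hx ht.1.le ht.2
    rw [Real.norm_eq_abs, abs_of_nonneg h.1]
    exact h.2
  · exact intervalIntegrable_const
  · filter_upwards [compl_mem_ae_iff.mpr (Real.volume_singleton (a := (1:ℝ)))] with t ht hmem
    rw [Set.uIoc_of_le zero_le_one] at hmem
    have ht1 : t < 1 := lt_of_le_of_ne hmem.2 (by simpa using ht)
    have hden : 1 + t * (x₀ - 1) ≠ 0 := (den_pos hx₀ hmem.1.le ht1).ne'
    have hca : ContinuousAt (fun x : ℝ => (1 - t) / (1 + t * (x - 1))) x₀ := by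
      apply ContinuousAt.div
      · exact continuousAt_const
      · fun_prop
      · exact hden
    exact hca.continuousWithinAt

lemma Fint_mem_Ioc {d : ℝ} (hd : 0 ≤ d) : Fint d ∈ Set.Ioc (0:ℝ) 1 := by
  constructor
  · apply intervalIntegral.intervalIntegral_pos_of_pos_on (integrable_integrand hd) _ one_pos
    intro t ht
    have hden := den_pos hd ht.1.le ht.2
    have : 0 < 1 - t := by linarith [ht.2]
    positivity
  · have : Fint d ≤ ∫ _ in (0:ℝ)..1, (1:ℝ) := by
      apply intervalIntegral.integral_mono_on zero_le_one (integrable_integrand hd)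
        intervalIntegrable_const
      intro t ht
      exact (integrand_bounds hd ht.1 ht.2).2
    simpa using this

lemma Fint_antitone : AntitoneOn Fint (Set.Ici (0:ℝ)) := by
  intro a ha b hb hab
  apply intervalIntegral.integral_mono_on zero_le_one (integrable_integrand hb)
    (integrable_integrand ha)
  intro t ht
  rcases eq_or_lt_of_le ht.2 with h | h
  · subst h; simp
  · have hda := den_pos ha ht.1 h
    have hdb := den_pos hb ht.1 h
    have hnum : 0 ≤ 1 - t := by linarith
    apply div_le_div_of_nonneg_left hnum hda
    nlinarith [mul_le_mul_of_nonneg_left hab ht.1]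

/-- `ψ` is continuous on `[0,∞)`, takes values in `(0,1]` there, and is weakly decreasing on
`[0,∞)`; in particular `(d·ln d − d + 1)/(d−1)²` tends to `1/2` as `d` tends to `1`. -/
theorem stmt11 :
    ContinuousOn psi (Set.Ici (0 : ℝ)) ∧
    (∀ d : ℝ, 0 ≤ d → psi d ∈ Set.Ioc (0 : ℝ) 1) ∧
    AntitoneOn psi (Set.Ici (0 : ℝ)) ∧
    Filter.Tendsto (fun d : ℝ => (d * Real.log d - d + 1) / (d - 1) ^ 2)
      (nhdsWithin 1 {(1 : ℝ)}ᶜ) (nhds (1 / 2)) := by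
  have heq : Set.EqOn psi Fint (Set.Ici (0:ℝ)) := fun d hd => (Fint_eq_psi hd).symm
  refine ⟨Fint_continuousOn.congr heq, ?_, ?_, ?_⟩
  · intro d hd; rw [← Fint_eq_psi hd]; exact Fint_mem_Ioc hd
  · intro a ha b hb hab
    rw [heq ha, heq hb]
    exact Fint_antitone ha hb hab
  · have hF1 : Fint 1 = 1/2 := by rw [Fint_eq_psi zero_le_one]; simp [psi]
    have hcont : ContinuousAt Fint 1 :=
      Fint_continuousOn.continuousAt (Ici_mem_nhds (by norm_num) : Set.Ici (0:ℝ) ∈ nhds 1)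
    have htend : Filter.Tendsto Fint (nhdsWithin 1 {(1:ℝ)}ᶜ) (nhds (1/2)) := by
      rw [← hF1]
      exact hcont.continuousWithinAt.tendsto
    apply htend.congr'
    have h1 : ∀ᶠ d : ℝ in nhdsWithin 1 {(1:ℝ)}ᶜ, d ∈ Set.Ioo (0:ℝ) 2 :=
      eventually_nhdsWithin_of_eventually_nhds (Ioo_mem_nhds one_pos (by norm_num))
    have h2 : ∀ᶠ d : ℝ in nhdsWithin 1 {(1:ℝ)}ᶜ, d ∈ ({(1:ℝ)}ᶜ : Set ℝ) :=
      eventually_mem_nhdsWithin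
    filter_upwards [h1, h2] with d hd hd1
    have hne : d ≠ 1 := hd1
    rw [Fint_eq_psi hd.1.le]
    simp [psi, hd.1.ne', hne]
end

section
/- Let n be a positive integer and let P be a triangle-free graph on {1,...,n} with e(P) + N(S_2,P) < ⌊n²/4⌋. Let S be the edge set of a balanced complete bipartite graph on {1,...,n} (so |S| = ⌊n²/4⌋), let B_1 be the set of pairs of distinct vertices having a common neighbor in P, and let B_2 be the graph on the 2-element subsets of {1,...,n} in which distinct pairs e_1, e_2 are adjacent iff |e_1 ∩ e_2| = 1 and e_1 △ e_2 ∈ P. Set S' = S \ (P ∪ B_1). Then the average degree of the subgraph of B_2 induced on S' is at most γ(P)·d(P), where γ(P) = n(n−2)/(⌊n²/4⌋ − e(P) − N(S_2,P)) and d(P) = 2e(P)/n. -/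
/-- The degree of a vertex: number of edges containing it. -/
def degP {n : ℕ} (P : Finset (Finset (Fin n))) (v : Fin n) : ℕ :=
  (P.filter (fun e => v ∈ e)).card

/-- The number of two-edge stars `S₂` in `P`: `∑_v C(d_P(v), 2)`. -/
def numS2 {n : ℕ} (P : Finset (Finset (Fin n))) : ℕ :=
  ∑ v : Fin n, (degP P v).choose 2

/-- `B₁`: the set of pairs `{u,v}` of distinct vertices admitting a common neighbour in `P`. -/
def B1 {n : ℕ} (P : Finset (Finset (Fin n))) : Finset (Finset (Fin n)) :=
  ((Finset.univ : Finset (Fin n)).powersetCard 2).filter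
    (fun e => ∃ u v w : Fin n, u ≠ v ∧ e = {u, v} ∧ w ≠ u ∧ w ≠ v ∧
      ({w, u} : Finset (Fin n)) ∈ P ∧ ({w, v} : Finset (Fin n)) ∈ P)

/-- The edge set of the complete bipartite graph on `{1,...,n}` with parts `A` and `Aᶜ`. -/
def bipEdges {n : ℕ} (A : Finset (Fin n)) : Finset (Finset (Fin n)) :=
  ((Finset.univ : Finset (Fin n)).powersetCard 2).filter
    (fun e => ∃ u ∈ A, ∃ v ∈ Aᶜ, e = {u, v})

/-- `S' = S \ (P ∪ B₁)`, where `S` is the edge set of the complete bipartite graph with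
parts `A` and `Aᶜ`. -/
def Sprime {n : ℕ} (P : Finset (Finset (Fin n))) (A : Finset (Fin n)) :
    Finset (Finset (Fin n)) :=
  bipEdges A \ (P ∪ B1 P)

lemma half_mul (n : ℕ) : n / 2 * (n - n / 2) = n ^ 2 / 4 := by
  obtain ⟨k, hk | hk⟩ := Nat.even_or_odd' n <;> subst hk
  · have h2 : 2 * k / 2 = k := by omega
    have h4 : (2 * k) ^ 2 = 4 * (k * (2 * k - k)) := by
      rw [show 2 * k - k = k by omega]; ring
    rw [h2, h4, Nat.mul_div_cancel_left _ (by norm_num)]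
  · have h2 : (2 * k + 1) / 2 = k := by omega
    have h4 : (2 * k + 1) ^ 2 = 4 * (k * (2 * k + 1 - k)) + 1 := by
      rw [show 2 * k + 1 - k = k + 1 by omega]; ring
    rw [h2, h4, Nat.mul_add_div (by norm_num)]
    simp

lemma card_bipEdges {n : ℕ} (A : Finset (Fin n)) :
    (bipEdges A).card = A.card * Aᶜ.card := by
  classical
  have himg : bipEdges A = (A ×ˢ Aᶜ).image (fun p => ({p.1, p.2} : Finset (Fin n))) := by
    ext e
    simp only [bipEdges, Finset.mem_filter, Finset.mem_powersetCard, Finset.mem_image,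
      Finset.mem_product]
    constructor
    · rintro ⟨_, u, hu, v, hv, rfl⟩
      exact ⟨(u, v), ⟨hu, hv⟩, rfl⟩
    · rintro ⟨⟨u, v⟩, ⟨hu, hv⟩, rfl⟩
      have huv : u ≠ v := by rintro rfl; exact (Finset.mem_compl.mp hv) hu
      exact ⟨⟨Finset.subset_univ _, Finset.card_pair huv⟩, u, hu, v, hv, rfl⟩
  rw [himg, Finset.card_image_of_injOn, Finset.card_product]
  rintro ⟨u, v⟩ huv ⟨u', v'⟩ hu'v' h
  simp only [Finset.coe_product, Set.mem_prod, Finset.mem_coe] at huv hu'v'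
  simp only at h
  have hu : u ∈ ({u', v'} : Finset (Fin n)) := h ▸ Finset.mem_insert_self u {v}
  have hv : v ∈ ({u', v'} : Finset (Fin n)) := h ▸ (by simp : v ∈ ({u, v} : Finset (Fin n)))
  simp only [Finset.mem_insert, Finset.mem_singleton] at hu hv
  have h1 : u = u' := by
    rcases hu with rfl | rfl
    · rfl
    · exact absurd huv.1 (Finset.mem_compl.mp hu'v'.2)
  have h2 : v = v' := by
    rcases hv with rfl | rfl
    · exact absurd hu'v'.1 (Finset.mem_compl.mp huv.2)
    · rfl
  simp [h1, h2]

lemma card_B1_le {n : ℕ} (P : Finset (Finset (Fin n))) (hP : IsGraph P) :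
    (B1 P).card ≤ numS2 P := by
  classical
  set Nb : Fin n → Finset (Fin n) :=
    fun w => Finset.univ.filter (fun x => ({w, x} : Finset (Fin n)) ∈ P) with hNb
  have hdeg : ∀ w, (Nb w).card = degP P w := by
    intro w
    apply Finset.card_bij (fun x _ => ({w, x} : Finset (Fin n)))
    · intro x hx
      simp only [hNb, Finset.mem_filter, Finset.mem_univ, true_and] at hx
      simp [degP, Finset.mem_filter, hx]
    · intro x hx y hy hxy
      simp only [hNb, Finset.mem_filter, Finset.mem_univ, true_and] at hx hy
      have hxw : x ≠ w := by
        rintro rfl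
        have := hP _ hx
        simp at this
      have hmem : x ∈ ({w, y} : Finset (Fin n)) := hxy ▸ (by simp)
      simp only [Finset.mem_insert, Finset.mem_singleton] at hmem
      tauto
    · intro e he
      simp only [degP, Finset.mem_filter] at he
      obtain ⟨a, b, hab, rfl⟩ := Finset.card_eq_two.mp (hP _ he.1)
      rcases Finset.mem_insert.mp he.2 with rfl | hw
      · exact ⟨b, by simp [hNb, he.1], rfl⟩
      · simp only [Finset.mem_singleton] at hw
        subst hw
        exact ⟨a, by simpa [hNb, Finset.pair_comm w a] using he.1, Finset.pair_comm _ a⟩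
  have hsub : B1 P ⊆ Finset.univ.biUnion (fun w => (Nb w).powersetCard 2) := by
    intro e he
    simp only [B1, Finset.mem_filter, Finset.mem_powersetCard] at he
    obtain ⟨⟨_, hcard⟩, u, v, w, huv, he2, hwu, hwv, h1, h2⟩ := he
    subst he2
    refine Finset.mem_biUnion.mpr ⟨w, Finset.mem_univ _, Finset.mem_powersetCard.mpr ⟨?_, hcard⟩⟩
    intro x hx
    simp only [Finset.mem_insert, Finset.mem_singleton] at hx
    rcases hx with rfl | rfl <;> simp [hNb, h1, h2]
  calc (B1 P).card ≤ (Finset.univ.biUnion (fun w => (Nb w).powersetCard 2)).card :=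
        Finset.card_le_card hsub
    _ ≤ ∑ w, ((Nb w).powersetCard 2).card := Finset.card_biUnion_le
    _ = numS2 P := by simp [Finset.card_powersetCard, hdeg, numS2]

lemma sum_deg_le {n : ℕ} (P : Finset (Finset (Fin n))) (hP : IsGraph P)
    (S : Finset (Finset (Fin n))) (hS : ∀ e ∈ S, e.card = 2) :
    ∑ e ∈ S, (S.filter (fun f => f ≠ e ∧ (e ∩ f).card = 1 ∧ symmDiff e f ∈ P)).card
      ≤ P.card * (2 * (n - 2)) := by
  classical
  set T := (S ×ˢ S).filter
    (fun q => q.2 ≠ q.1 ∧ (q.1 ∩ q.2).card = 1 ∧ symmDiff q.1 q.2 ∈ P) with hT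
  have hsum : ∑ e ∈ S,
      (S.filter (fun f => f ≠ e ∧ (e ∩ f).card = 1 ∧ symmDiff e f ∈ P)).card = T.card := by
    rw [hT]
    simp only [Finset.card_filter]
    rw [Finset.sum_product]
  rw [hsum]
  have hmap : ∀ q ∈ T, symmDiff q.1 q.2 ∈ P := by
    intro q hq
    exact ((Finset.mem_filter.mp hq).2).2.2
  rw [Finset.card_eq_sum_card_fiberwise hmap]
  calc ∑ p ∈ P, (T.filter (fun q => symmDiff q.1 q.2 = p)).card
      ≤ P.card * (2 * (n - 2)) := by
        apply Finset.sum_le_card_nsmul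
        intro p hp
        have hp2 : p.card = 2 := hP p hp
        have hcompl : (pᶜ).card = n - 2 := by
          rw [Finset.card_compl, hp2, Fintype.card_fin]
        have htarget : ((p.powersetCard 1) ×ˢ ((pᶜ).powersetCard 1)).card = 2 * (n - 2) := by
          simp [Finset.card_powersetCard, hp2, hcompl]
        rw [← htarget]
        apply Finset.card_le_card_of_injOn (fun q => (q.1 \ q.2, q.1 ∩ q.2))
        · intro q hq
          obtain ⟨hqT, hdiff⟩ := Finset.mem_filter.mp hq
          obtain ⟨hmem, hne, hint, hPm⟩ := Finset.mem_filter.mp hqT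
          have he2 : q.1.card = 2 := hS _ (Finset.mem_product.mp hmem).1
          have hcards := Finset.card_inter_add_card_sdiff q.1 q.2
          refine Finset.mem_product.mpr ⟨Finset.mem_powersetCard.mpr ⟨?_, ?_⟩,
            Finset.mem_powersetCard.mpr ⟨?_, hint⟩⟩
          · intro x hx
            rw [Finset.mem_sdiff] at hx
            rw [← hdiff]
            exact Finset.mem_symmDiff.mpr (Or.inl ⟨hx.1, hx.2⟩)
          · show (q.1 \ q.2).card = 1
            omega
          · intro x hx
            rw [Finset.mem_inter] at hx
            rw [Finset.mem_compl, ← hdiff]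
            simp [Finset.mem_symmDiff, hx.1, hx.2]
        · intro q hq q' hq' heq
          simp only [Prod.mk.injEq] at heq
          have hp1 : symmDiff q.1 q.2 = p := (Finset.mem_filter.mp hq).2
          have hp1' : symmDiff q'.1 q'.2 = p := (Finset.mem_filter.mp hq').2
          have h1 : q.1 = q'.1 := by
            calc q.1 = (q.1 \ q.2) ∪ (q.1 ∩ q.2) := (Finset.sdiff_union_inter _ _).symm
              _ = (q'.1 \ q'.2) ∪ (q'.1 ∩ q'.2) := by rw [heq.1, heq.2]
              _ = q'.1 := Finset.sdiff_union_inter _ _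
          have h2 : q.2 = q'.2 := by
            have e1 : q.2 = symmDiff q.1 (symmDiff q.1 q.2) :=
              (symmDiff_symmDiff_cancel_left _ _).symm
            rw [e1, hp1, h1, ← hp1', symmDiff_symmDiff_cancel_left]
          exact Prod.ext h1 h2

/-- The average degree of the subgraph of `B₂` induced on `S'` is at most `γ(P)·d(P)`:
here the degree of `e ∈ S'` in `B₂[S']` is the number of `f ∈ S'` with `|e ∩ f| = 1` and
`e ∆ f ∈ P`, the average degree is the sum of these degrees divided by `|S'|`,
`γ(P) = n(n−2)/(⌊n²/4⌋ − e(P) − N(S₂,P))` and `d(P) = 2e(P)/n`. -/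
theorem stmt12 {n : ℕ} (hn : 0 < n) (P : Finset (Finset (Fin n)))
    (hP : IsGraph P) (hPtf : TriangleFree P)
    (hsize : P.card + numS2 P < n ^ 2 / 4)
    (A : Finset (Fin n)) (hA : A.card = n / 2) :
    (∑ e ∈ Sprime P A,
        (((Sprime P A).filter
          (fun f => f ≠ e ∧ (e ∩ f).card = 1 ∧ symmDiff e f ∈ P)).card : ℝ)) /
        ((Sprime P A).card : ℝ)
      ≤ ((n : ℝ) * ((n : ℝ) - 2) /
            (((n ^ 2 / 4 : ℕ) : ℝ) - (P.card : ℝ) - (numS2 P : ℝ))) *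
          (2 * (P.card : ℝ) / (n : ℝ)) := by
  classical
  have hn2 : 2 ≤ n := by
    rcases Nat.lt_or_ge n 2 with h | h
    · have hn1 : n = 1 := by omega
      have h0 : n ^ 2 / 4 = 0 := by subst hn1; norm_num
      omega
    · exact h
  -- elements of Sprime have card 2
  have hS2 : ∀ e ∈ Sprime P A, e.card = 2 := by
    intro e he
    have := (Finset.mem_sdiff.mp he).1
    exact (Finset.mem_powersetCard.mp (Finset.mem_filter.mp this).1).2
  -- numerator bound
  have hnum := sum_deg_le P hP (Sprime P A) hS2
  -- denominator bound
  have hScard : n ^ 2 / 4 ≤ (Sprime P A).card + P.card + numS2 P := by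
    have h1 : bipEdges A ⊆ Sprime P A ∪ (P ∪ B1 P) := by
      intro e he
      by_cases h : e ∈ P ∪ B1 P
      · exact Finset.mem_union_right _ h
      · exact Finset.mem_union_left _ (Finset.mem_sdiff.mpr ⟨he, h⟩)
    have h2 : (bipEdges A).card = n ^ 2 / 4 := by
      rw [card_bipEdges A, hA, Finset.card_compl, Fintype.card_fin, hA]
      exact half_mul n
    have h3 := Finset.card_le_card h1
    have h4 := Finset.card_union_le (Sprime P A) (P ∪ B1 P)
    have h5 := Finset.card_union_le P (B1 P)
    have h6 := card_B1_le P hP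
    omega
  -- real versions
  have hDr : (0 : ℝ) < ((n ^ 2 / 4 : ℕ) : ℝ) - (P.card : ℝ) - (numS2 P : ℝ) := by
    have hc : ((P.card + numS2 P : ℕ) : ℝ) < ((n ^ 2 / 4 : ℕ) : ℝ) := by
      exact_mod_cast hsize
    push_cast at hc
    linarith
  have hbr : ((n ^ 2 / 4 : ℕ) : ℝ) - (P.card : ℝ) - (numS2 P : ℝ) ≤ ((Sprime P A).card : ℝ) := by
    have hc : ((n ^ 2 / 4 : ℕ) : ℝ) ≤ (((Sprime P A).card + P.card + numS2 P : ℕ) : ℝ) := by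
      exact_mod_cast hScard
    push_cast at hc
    linarith
  have hnr : (∑ e ∈ Sprime P A,
      (((Sprime P A).filter
        (fun f => f ≠ e ∧ (e ∩ f).card = 1 ∧ symmDiff e f ∈ P)).card : ℝ))
      ≤ 2 * ((n : ℝ) - 2) * (P.card : ℝ) := by
    have hc : ((∑ e ∈ Sprime P A,
        ((Sprime P A).filter
          (fun f => f ≠ e ∧ (e ∩ f).card = 1 ∧ symmDiff e f ∈ P)).card : ℕ) : ℝ)
        ≤ ((P.card * (2 * (n - 2)) : ℕ) : ℝ) := by exact_mod_cast hnum
    push_cast [Nat.cast_sub hn2] at hc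
    linarith
  have hRHS : ((n : ℝ) * ((n : ℝ) - 2) /
        (((n ^ 2 / 4 : ℕ) : ℝ) - (P.card : ℝ) - (numS2 P : ℝ))) *
      (2 * (P.card : ℝ) / (n : ℝ))
      = 2 * ((n : ℝ) - 2) * (P.card : ℝ) /
        (((n ^ 2 / 4 : ℕ) : ℝ) - (P.card : ℝ) - (numS2 P : ℝ)) := by
    have hn0 : (n : ℝ) ≠ 0 := by positivity
    field_simp
  rw [hRHS]
  apply div_le_div₀ _ hnr hDr hbr
  have : (0:ℝ) ≤ (n : ℝ) - 2 := by
    have : (2:ℝ) ≤ (n : ℝ) := by exact_mod_cast hn2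
    linarith
  positivity
end
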